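/- arXiv:2501.18143 — 5 statements merged into one kernel-verified Lean document; each statement's English description precedes it below -/
import Mathlib

section
/- Let c be a positive integer, p ∈ ℝ^c, and suppose η ∈ ℝ satisfies Σ_{j=1}^c max(p_j + η, 0) = 1. Define x* ∈ ℝ^c by x*_j = max(p_j + η, 0). Then x* lies in the probability simplex Δ = {x ∈ ℝ^c : x ≥ 0 entrywise, Σ_j x_j = 1}, and for every x ∈ Δ one has ‖x* − p‖₂ ≤ ‖x − p‖₂; i.e., x* is the Euclidean projection of p onto Δ. -/
/-- The thresholded shift `x*_j = max (p_j + η) 0`, where `η` makes the entries sum to `1`,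
is the Euclidean projection of `p` onto the probability simplex. -/
theorem simplex_projection {c : ℕ} (hc : 0 < c) (p : Fin c → ℝ) (η : ℝ)
    (hη : ∑ j, max (p j + η) 0 = 1) :
    (∀ j, 0 ≤ max (p j + η) 0) ∧ (∑ j, max (p j + η) 0 = 1) ∧
      ∀ x : Fin c → ℝ, (∀ j, 0 ≤ x j) → (∑ j, x j = 1) →
        Real.sqrt (∑ j, (max (p j + η) 0 - p j) ^ 2) ≤
          Real.sqrt (∑ j, (x j - p j) ^ 2) := by
  refine ⟨fun j => le_max_right _ _, hη, ?_⟩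
  intro x hx hsum
  apply Real.sqrt_le_sqrt
  set s : Fin c → ℝ := fun j => max (p j + η) 0 with hs
  have key : ∀ j, η * (x j - s j) ≤ (x j - s j) * (s j - p j) := by
    intro j
    by_cases h : 0 ≤ p j + η
    · have hsj : s j = p j + η := max_eq_left h
      rw [hsj]; exact le_of_eq (by ring)
    · push_neg at h
      have hsj : s j = 0 := max_eq_right h.le
      have := hx j
      rw [hsj]
      nlinarith
  have sumdiff : ∑ j, (x j - s j) = 0 := by
    rw [Finset.sum_sub_distrib, hsum]
    simp only [hs] at hη ⊢
    rw [hη]; ring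
  have sumkey : 0 ≤ ∑ j, (x j - s j) * (s j - p j) := by
    calc (0:ℝ) = ∑ j, η * (x j - s j) := by rw [← Finset.mul_sum, sumdiff, mul_zero]
      _ ≤ _ := Finset.sum_le_sum fun j _ => key j
  have expand : ∑ j, (x j - p j) ^ 2
      = ∑ j, ((x j - s j) ^ 2 + 2 * ((x j - s j) * (s j - p j)) + (s j - p j) ^ 2) := by
    apply Finset.sum_congr rfl
    intro j _
    ring
  have sq_nn : 0 ≤ ∑ j, (x j - s j) ^ 2 :=
    Finset.sum_nonneg fun j _ => sq_nonneg _
  rw [expand, Finset.sum_add_distrib, Finset.sum_add_distrib, ← Finset.mul_sum]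
  linarith
end

section
/- (Frank–Wolfe convergence, O(1/t), simple step size.) Let E be a real inner product space, n > 0 a real number, and Ω ⊆ E a nonempty convex set with ‖x − y‖² ≤ 2n for all x, y ∈ Ω. Let f : E → ℝ be convex and differentiable with L-Lipschitz gradient (L > 0), and let F* ∈ Ω satisfy f(F*) ≤ f(P) for all P ∈ Ω. Let F⁰ ∈ Ω satisfy f(F⁰) − f(F*) ≤ (14/3)·n·L, and define iterates F^{t+1} = (1 − μ_t)F^t + μ_t P^t, where μ_t = 2/(t+2) and P^t ∈ Ω satisfies ⟨∇f(F^t), P^t⟩ ≤ ⟨∇f(F^t), P⟩ for all P ∈ Ω. Then for every t ≥ 1, f(F^t) − f(F*) ≤ 4nL/(t+1). -/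
open scoped RealInnerProductSpace

section Aux

variable {E : Type*} [NormedAddCommGroup E] [InnerProductSpace ℝ E] [CompleteSpace E]

lemma fw_line_hasDerivAt (f : E → ℝ) (f' : E → E) (hf : ∀ x, HasGradientAt f (f' x) x)
    (x v : E) (s : ℝ) :
    HasDerivAt (fun s : ℝ => f (x + s • v)) ⟪f' (x + s • v), v⟫ s := by
  have hc : HasDerivAt (fun s : ℝ => x + s • v) v s := by
    simpa using ((hasDerivAt_id s).smul_const v).const_add x
  have h2 := ((hf (x + s • v)).hasFDerivAt).comp_hasDerivAt s hc
  simpa [InnerProductSpace.toDual_apply_apply, Function.comp_def] using h2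

/-- Descent lemma for functions with Lipschitz gradient. -/
lemma fw_descent (f : E → ℝ) (f' : E → E) (hf : ∀ x, HasGradientAt f (f' x) x)
    (L : ℝ) (hL : 0 ≤ L) (hLip : ∀ x y, ‖f' x - f' y‖ ≤ L * ‖x - y‖) (x y : E) :
    f y ≤ f x + ⟪f' x, y - x⟫ + L / 2 * ‖y - x‖ ^ 2 := by
  set v := y - x with hv
  set g' : ℝ → ℝ := fun s => ⟪f' (x + s • v), v⟫ with hg'
  have hcontf' : Continuous f' := by
    have : LipschitzWith (Real.toNNReal L) f' := by
      apply LipschitzWith.of_dist_le_mul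
      intro a b
      rw [dist_eq_norm, dist_eq_norm]
      calc ‖f' a - f' b‖ ≤ L * ‖a - b‖ := hLip a b
        _ ≤ Real.toNNReal L * ‖a - b‖ := by
            gcongr; exact (Real.le_coe_toNNReal L)
    exact this.continuous
  have hcont : Continuous g' := by
    apply Continuous.inner
    · exact hcontf'.comp (by continuity)
    · exact continuous_const
  have hderiv : ∀ s ∈ Set.uIcc (0:ℝ) 1, HasDerivAt (fun s : ℝ => f (x + s • v)) (g' s) s :=
    fun s _ => fw_line_hasDerivAt f f' hf x v s
  have hFTC : f (x + (1:ℝ) • v) - f (x + (0:ℝ) • v) = ∫ s in (0:ℝ)..1, g' s :=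
    (intervalIntegral.integral_eq_sub_of_hasDerivAt hderiv
      (hcont.intervalIntegrable 0 1)).symm
  have hbound : ∀ s ∈ Set.Icc (0:ℝ) 1, g' s ≤ g' 0 + L * s * ‖v‖ ^ 2 := by
    intro s hs
    have h1 : g' s - g' 0 = ⟪f' (x + s • v) - f' (x + (0:ℝ) • v), v⟫ := by
      simp [hg', inner_sub_left]
    have h2 : ⟪f' (x + s • v) - f' (x + (0:ℝ) • v), v⟫ ≤ L * s * ‖v‖ ^ 2 := by
      calc ⟪f' (x + s • v) - f' (x + (0:ℝ) • v), v⟫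
          ≤ ‖f' (x + s • v) - f' (x + (0:ℝ) • v)‖ * ‖v‖ := real_inner_le_norm _ _
        _ ≤ (L * ‖(x + s • v) - (x + (0:ℝ) • v)‖) * ‖v‖ := by
            gcongr; exact hLip _ _
        _ = L * s * ‖v‖ ^ 2 := by
            have : ‖(x + s • v) - (x + (0:ℝ) • v)‖ = s * ‖v‖ := by
              simp [norm_smul, abs_of_nonneg hs.1]
            rw [this]; ring
    linarith [h1 ▸ h2]
  have hintle : ∫ s in (0:ℝ)..1, g' s ≤ ∫ s in (0:ℝ)..1, (g' 0 + L * s * ‖v‖ ^ 2) := by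
    apply intervalIntegral.integral_mono_on (by norm_num)
      (hcont.intervalIntegrable 0 1)
      ((Continuous.intervalIntegrable (by continuity) 0 1))
    exact hbound
  have hval : ∫ s in (0:ℝ)..1, (g' 0 + L * s * ‖v‖ ^ 2) = g' 0 + L / 2 * ‖v‖ ^ 2 := by
    rw [intervalIntegral.integral_add (intervalIntegrable_const)
      ((Continuous.intervalIntegrable (by continuity) 0 1))]
    have : ∫ s in (0:ℝ)..1, L * s * ‖v‖ ^ 2 = L / 2 * ‖v‖ ^ 2 := by
      have : (fun s : ℝ => L * s * ‖v‖ ^ 2) = fun s : ℝ => (L * ‖v‖ ^ 2) * s := by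
        funext s; ring
      rw [this, intervalIntegral.integral_const_mul, integral_id]
      ring
    rw [this]; simp
  have h0 : g' 0 = ⟪f' x, v⟫ := by simp [hg']
  have hxy : x + (1:ℝ) • v = y := by simp [hv]
  have hx0 : x + (0:ℝ) • v = x := by simp
  rw [hxy, hx0] at hFTC
  linarith [hFTC, hintle, hval.le, hval.ge, h0.le, h0.ge]

/-- Gradient inequality for convex functions. -/
lemma fw_convex_grad (f : E → ℝ) (f' : E → E) (hconv : ConvexOn ℝ Set.univ f)
    (hf : ∀ x, HasGradientAt f (f' x) x) (x y : E) :
    f x + ⟪f' x, y - x⟫ ≤ f y := by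
  set v := y - x with hv
  have hg : ConvexOn ℝ Set.univ (fun s : ℝ => f (x + s • v)) := by
    have := hconv.comp_affineMap (AffineMap.lineMap x y : ℝ →ᵃ[ℝ] E)
    have heq : (f ∘ (AffineMap.lineMap x y : ℝ →ᵃ[ℝ] E)) = fun s : ℝ => f (x + s • v) := by
      funext s
      simp [AffineMap.lineMap_apply, hv]
      congr 1
      module
    rw [heq] at this
    simpa using this
  have hderiv := fw_line_hasDerivAt f f' hf x v 0
  have hslope := hg.le_slope_of_hasDerivAt (Set.mem_univ 0) (Set.mem_univ 1)
    one_pos (by simpa using hderiv)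
  have : ⟪f' x, v⟫ ≤ f (x + (1:ℝ) • v) - f (x + (0:ℝ) • v) := by
    simpa [slope_def_field] using hslope
  have hxy : x + (1:ℝ) • v = y := by simp [hv]
  have hx0 : x + (0:ℝ) • v = x := by simp
  rw [hxy, hx0] at this
  linarith

end Aux

/-- Frank–Wolfe convergence at rate `O(1/t)` with the simple step size `μ_t = 2/(t+2)`. -/
theorem frank_wolfe_rate_simple_step {E : Type*} [NormedAddCommGroup E]
    [InnerProductSpace ℝ E] [CompleteSpace E]
    (n : ℝ) (hn : 0 < n) (Ω : Set E) (hne : Ω.Nonempty) (hΩ : Convex ℝ Ω)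
    (hdiam : ∀ x ∈ Ω, ∀ y ∈ Ω, ‖x - y‖ ^ 2 ≤ 2 * n)
    (f : E → ℝ) (f' : E → E)
    (hconv : ConvexOn ℝ Set.univ f) (hf : ∀ x, HasGradientAt f (f' x) x)
    (L : ℝ) (hL : 0 < L) (hLip : ∀ x y, ‖f' x - f' y‖ ≤ L * ‖x - y‖)
    (Fstar : E) (hFstar : Fstar ∈ Ω) (hopt : ∀ P ∈ Ω, f Fstar ≤ f P)
    (F P : ℕ → E) (hF0 : F 0 ∈ Ω)
    (hinit : f (F 0) - f Fstar ≤ (14 / 3) * n * L)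
    (hP : ∀ t, P t ∈ Ω)
    (hPmin : ∀ t, ∀ Q ∈ Ω, ⟪f' (F t), P t⟫ ≤ ⟪f' (F t), Q⟫)
    (hupd : ∀ t : ℕ, F (t + 1) =
      (1 - 2 / ((t : ℝ) + 2)) • F t + (2 / ((t : ℝ) + 2)) • P t) :
    ∀ t : ℕ, 1 ≤ t → f (F t) - f Fstar ≤ 4 * n * L / ((t : ℝ) + 1) := by
  -- membership of iterates
  have hFmem : ∀ t, F t ∈ Ω := by
    intro t
    induction t with
    | zero => exact hF0
    | succ t ih =>
      rw [hupd t]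
      have h2 : (0:ℝ) < (t:ℝ) + 2 := by positivity
      have hμ1 : 2 / ((t:ℝ) + 2) ≤ 1 := by
        rw [div_le_one h2]; linarith [Nat.cast_nonneg (α := ℝ) t]
      exact hΩ ih (hP t) (by linarith) (by positivity) (by ring)
  -- key recursion
  have hrec : ∀ t : ℕ, f (F (t + 1)) - f Fstar ≤
      (1 - 2 / ((t:ℝ) + 2)) * (f (F t) - f Fstar) + (2 / ((t:ℝ) + 2)) ^ 2 * n * L := by
    intro t
    set μ := 2 / ((t:ℝ) + 2) with hμ
    have h2 : (0:ℝ) < (t:ℝ) + 2 := by positivity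
    have hμpos : 0 < μ := by positivity
    have hdiff : F (t + 1) - F t = μ • (P t - F t) := by
      rw [hupd t, ← hμ]
      module
    have hdesc := fw_descent f f' hf L hL.le hLip (F t) (F (t + 1))
    rw [hdiff] at hdesc
    have hnorm : ‖μ • (P t - F t)‖ ^ 2 = μ ^ 2 * ‖P t - F t‖ ^ 2 := by
      rw [norm_smul]; simp [abs_of_pos hμpos]; ring
    have hinner : ⟪f' (F t), μ • (P t - F t)⟫ = μ * ⟪f' (F t), P t - F t⟫ := by
      rw [real_inner_smul_right]
    have hdir : ⟪f' (F t), P t - F t⟫ ≤ f Fstar - f (F t) := by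
      have h1 : ⟪f' (F t), P t⟫ ≤ ⟪f' (F t), Fstar⟫ := hPmin t Fstar hFstar
      have h2' := fw_convex_grad f f' hconv hf (F t) Fstar
      have e1 : ⟪f' (F t), P t - F t⟫ = ⟪f' (F t), P t⟫ - ⟪f' (F t), F t⟫ := by
        rw [inner_sub_right]
      have e2 : ⟪f' (F t), Fstar - F t⟫ = ⟪f' (F t), Fstar⟫ - ⟪f' (F t), F t⟫ := by
        rw [inner_sub_right]
      linarith
    have hdd : ‖P t - F t‖ ^ 2 ≤ 2 * n := hdiam _ (hP t) _ (hFmem t)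
    rw [hinner, hnorm] at hdesc
    have hμ2 : 0 ≤ L / 2 * μ ^ 2 := by positivity
    nlinarith [mul_le_mul_of_nonneg_left hdd hμ2, mul_le_mul_of_nonneg_left hdir hμpos.le]
  -- induction
  intro t ht
  induction t with
  | zero => omega
  | succ t ih =>
    rcases Nat.eq_zero_or_pos t with h0 | hpos
    · subst h0
      have := hrec 0
      norm_num at this ⊢
      nlinarith
    · have iht := ih hpos
      have hrect := hrec t
      have h2 : (0:ℝ) < (t:ℝ) + 2 := by positivity
      have h1 : (0:ℝ) < (t:ℝ) + 1 := by positivity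
      have hcoef : (0:ℝ) ≤ 1 - 2 / ((t:ℝ) + 2) := by
        rw [sub_nonneg, div_le_one h2]; linarith [Nat.cast_nonneg (α := ℝ) t]
      have hchain : f (F (t + 1)) - f Fstar ≤
          (1 - 2 / ((t:ℝ) + 2)) * (4 * n * L / ((t:ℝ) + 1)) + (2 / ((t:ℝ) + 2)) ^ 2 * n * L := by
        calc f (F (t + 1)) - f Fstar
            ≤ (1 - 2 / ((t:ℝ) + 2)) * (f (F t) - f Fstar) + (2 / ((t:ℝ) + 2)) ^ 2 * n * L :=
              hrect
          _ ≤ (1 - 2 / ((t:ℝ) + 2)) * (4 * n * L / ((t:ℝ) + 1)) + (2 / ((t:ℝ) + 2)) ^ 2 * n * L := by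
              gcongr
      have harith : (1 - 2 / ((t:ℝ) + 2)) * (4 * n * L / ((t:ℝ) + 1)) + (2 / ((t:ℝ) + 2)) ^ 2 * n * L
          ≤ 4 * n * L / ((t:ℝ) + 2) := by
        have e : 4 * n * L / ((t:ℝ) + 2) -
            ((1 - 2 / ((t:ℝ) + 2)) * (4 * n * L / ((t:ℝ) + 1)) + (2 / ((t:ℝ) + 2)) ^ 2 * n * L)
            = 4 * n * L / (((t:ℝ) + 1) * ((t:ℝ) + 2) ^ 2) := by
          field_simp
          ring
        have pos : (0:ℝ) ≤ 4 * n * L / (((t:ℝ) + 1) * ((t:ℝ) + 2) ^ 2) := by positivity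
        linarith
      have hfin : f (F (t + 1)) - f Fstar ≤ 4 * n * L / ((t:ℝ) + 2) := le_trans hchain harith
      have : ((t:ℝ) + 1) + 1 = (t:ℝ) + 2 := by ring
      rw [Nat.cast_succ, this]
      exact hfin
end

section
/- (Frank–Wolfe for nonconvex objectives, O(1/√t) dual-gap rate.) Let E be a real inner product space, n > 0 a real number, and Ω ⊆ E a nonempty convex set with ‖x − y‖² ≤ 2n for all x, y ∈ Ω. Let f : E → ℝ be differentiable with L-Lipschitz gradient (L > 0), and let F* ∈ Ω satisfy f(F*) ≤ f(P) for all P ∈ Ω. Starting from F⁰ ∈ Ω, at each step let P^t ∈ Ω satisfy ⟨∇f(F^t), P^t⟩ ≤ ⟨∇f(F^t), P⟩ for all P ∈ Ω, set g_t = ⟨∇f(F^t), F^t − P^t⟩, μ_t = min(g_t/(2Ln), 1), and F^{t+1} = F^t + μ_t(P^t − F^t). Then for every T ≥ 0, min_{0 ≤ k ≤ T} g_k ≤ max{2(f(F⁰) − f(F*)), 2nL} / √(T+1). -/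
open scoped RealInnerProductSpace

theorem descent_lemma {E : Type*} [NormedAddCommGroup E]
    [InnerProductSpace ℝ E] [CompleteSpace E]
    (f : E → ℝ) (f' : E → E) (hf : ∀ x, HasGradientAt f (f' x) x)
    (L : ℝ) (hL : 0 ≤ L) (hLip : ∀ x y, ‖f' x - f' y‖ ≤ L * ‖x - y‖)
    (x y : E) : f y ≤ f x + ⟪f' x, y - x⟫ + L / 2 * ‖y - x‖ ^ 2 := by
  set d := y - x with hd
  set φ : ℝ → ℝ := fun s => f (x + s • d) - s * ⟪f' x, d⟫ - L / 2 * s ^ 2 * ‖d‖ ^ 2 with hφ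
  have hder : ∀ s : ℝ, HasDerivAt φ
      (⟪f' (x + s • d), d⟫ - ⟪f' x, d⟫ - L * s * ‖d‖ ^ 2) s := by
    intro s
    have h1 : HasDerivAt (fun s : ℝ => x + s • d) d s := by
      simpa using ((hasDerivAt_id s).smul_const d).const_add x
    have h2 : HasDerivAt (fun s : ℝ => f (x + s • d)) ⟪f' (x + s • d), d⟫ s := by
      have := ((hf (x + s • d)).hasFDerivAt.comp_hasDerivAt s h1)
      simp at this
      exact this
    have h3 : HasDerivAt (fun s : ℝ => s * ⟪f' x, d⟫) ⟪f' x, d⟫ s := by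
      simpa using (hasDerivAt_id s).mul_const (⟪f' x, d⟫ : ℝ)
    have h4 : HasDerivAt (fun s : ℝ => L / 2 * s ^ 2 * ‖d‖ ^ 2) (L * s * ‖d‖ ^ 2) s := by
      have := ((hasDerivAt_pow 2 s).const_mul (L / 2)).mul_const (‖d‖ ^ 2)
      have e : L * s * ‖d‖ ^ 2 = L / 2 * ((2:ℕ) * s ^ (2 - 1)) * ‖d‖ ^ 2 := by
        push_cast; ring
      rw [e]; exact this
    have h5 := (h2.sub h3).sub h4
    exact h5
  have hmono : AntitoneOn φ (Set.Icc 0 1) := by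
    apply antitoneOn_of_deriv_nonpos (convex_Icc 0 1)
    · exact fun s _ => (hder s).continuousAt.continuousWithinAt
    · exact fun s _ => (hder s).differentiableAt.differentiableWithinAt
    · intro s hs
      rw [(hder s).deriv]
      rw [interior_Icc] at hs
      have hs0 : (0:ℝ) ≤ s := hs.1.le
      have key : ⟪f' (x + s • d), d⟫ - ⟪f' x, d⟫ ≤ L * s * ‖d‖ ^ 2 := by
        have h5 : ⟪f' (x + s • d) - f' x, d⟫ ≤ ‖f' (x + s • d) - f' x‖ * ‖d‖ :=
          real_inner_le_norm _ _
        have h6 : ‖f' (x + s • d) - f' x‖ ≤ L * (s * ‖d‖) := by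
          have := hLip (x + s • d) x
          simpa [norm_smul, abs_of_nonneg hs0] using this
        have h7 : ‖f' (x + s • d) - f' x‖ * ‖d‖ ≤ L * (s * ‖d‖) * ‖d‖ :=
          mul_le_mul_of_nonneg_right h6 (norm_nonneg d)
        calc ⟪f' (x + s • d), d⟫ - ⟪f' x, d⟫ = ⟪f' (x + s • d) - f' x, d⟫ := by
              rw [inner_sub_left]
          _ ≤ L * (s * ‖d‖) * ‖d‖ := le_trans h5 h7
          _ = L * s * ‖d‖ ^ 2 := by ring
      linarith
  have h01 := hmono (Set.left_mem_Icc.mpr zero_le_one) (Set.right_mem_Icc.mpr zero_le_one) zero_le_one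
  have e0 : φ 0 = f x := by simp [hφ, hd]
  have e1 : φ 1 = f y - ⟪f' x, d⟫ - L / 2 * ‖d‖ ^ 2 := by simp [hφ, hd]
  rw [e0, e1] at h01
  linarith

/-- Frank–Wolfe for (possibly nonconvex) `L`-smooth objectives: the minimal dual gap
over the first `T+1` iterations decays at rate `O(1/√T)`. -/
theorem frank_wolfe_nonconvex_dual_gap_rate {E : Type*} [NormedAddCommGroup E]
    [InnerProductSpace ℝ E] [CompleteSpace E]
    (n : ℝ) (hn : 0 < n) (Ω : Set E) (hne : Ω.Nonempty) (hΩ : Convex ℝ Ω)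
    (hdiam : ∀ x ∈ Ω, ∀ y ∈ Ω, ‖x - y‖ ^ 2 ≤ 2 * n)
    (f : E → ℝ) (f' : E → E) (hf : ∀ x, HasGradientAt f (f' x) x)
    (L : ℝ) (hL : 0 < L) (hLip : ∀ x y, ‖f' x - f' y‖ ≤ L * ‖x - y‖)
    (Fstar : E) (hFstar : Fstar ∈ Ω) (hopt : ∀ P ∈ Ω, f Fstar ≤ f P)
    (F P : ℕ → E) (g μ : ℕ → ℝ) (hF0 : F 0 ∈ Ω)
    (hP : ∀ t, P t ∈ Ω)
    (hPmin : ∀ t, ∀ Q ∈ Ω, ⟪f' (F t), P t⟫ ≤ ⟪f' (F t), Q⟫)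
    (hg : ∀ t, g t = ⟪f' (F t), F t - P t⟫)
    (hμ : ∀ t, μ t = min (g t / (2 * L * n)) 1)
    (hupd : ∀ t : ℕ, F (t + 1) = F t + μ t • (P t - F t)) :
    ∀ T : ℕ, (Finset.range (T + 1)).inf' Finset.nonempty_range_add_one g ≤
      max (2 * (f (F 0) - f Fstar)) (2 * n * L) / Real.sqrt ((T : ℝ) + 1) := by
  have hLn : 0 < 2 * L * n := by positivity
  -- membership of iterates
  have hmem : ∀ t, F t ∈ Ω := by
    intro t
    induction t with
    | zero => exact hF0
    | succ t ih =>
      have hg0 : 0 ≤ g t := by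
        have := hPmin t (F t) ih
        rw [hg t, inner_sub_right]; linarith
      have hμ0 : 0 ≤ μ t := by
        rw [hμ t]; exact le_min (div_nonneg hg0 hLn.le) zero_le_one
      have hμ1 : μ t ≤ 1 := by rw [hμ t]; exact min_le_right _ _
      have heq : F (t + 1) = (1 - μ t) • F t + μ t • P t := by
        rw [hupd t]; module
      rw [heq]
      exact hΩ ih (hP t) (by linarith) hμ0 (by ring)
  have hg0 : ∀ t, 0 ≤ g t := by
    intro t
    have := hPmin t (F t) (hmem t)
    rw [hg t, inner_sub_right]; linarith
  -- per-step decrease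
  have hstep : ∀ t, f (F (t + 1)) ≤ f (F t) - min (g t ^ 2 / (4 * L * n)) (g t / 2) := by
    intro t
    have hdl := descent_lemma f f' hf L hL.le hLip (F t) (F (t + 1))
    have hdiff : F (t + 1) - F t = μ t • (P t - F t) := by rw [hupd t]; abel
    have hinner : ⟪f' (F t), F (t + 1) - F t⟫ = - (μ t * g t) := by
      rw [hdiff, real_inner_smul_right, hg t]
      have : ⟪f' (F t), P t - F t⟫ = - ⟪f' (F t), F t - P t⟫ := by
        rw [← inner_neg_right]; congr 1; abel
      rw [this]; ring
    have hnorm : ‖F (t + 1) - F t‖ ^ 2 ≤ μ t ^ 2 * (2 * n) := by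
      rw [hdiff, norm_smul, Real.norm_eq_abs]
      have h1 : ‖P t - F t‖ ^ 2 ≤ 2 * n := hdiam _ (hP t) _ (hmem t)
      have : (|μ t| * ‖P t - F t‖) ^ 2 = μ t ^ 2 * ‖P t - F t‖ ^ 2 := by
        rw [mul_pow, sq_abs]
      rw [this]
      exact mul_le_mul_of_nonneg_left h1 (sq_nonneg _)
    have hbd : f (F (t + 1)) ≤ f (F t) - μ t * g t + L * n * μ t ^ 2 := by
      have h2 : L / 2 * ‖F (t + 1) - F t‖ ^ 2 ≤ L / 2 * (μ t ^ 2 * (2 * n)) :=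
        mul_le_mul_of_nonneg_left hnorm (by positivity)
      rw [hinner] at hdl
      nlinarith
    rcases le_or_gt (g t) (2 * L * n) with hcase | hcase
    · have hμeq : μ t = g t / (2 * L * n) := by
        rw [hμ t, min_eq_left]
        exact (div_le_one hLn).mpr hcase
      have key : f (F (t + 1)) ≤ f (F t) - g t ^ 2 / (4 * L * n) := by
        rw [hμeq] at hbd
        have : g t / (2 * L * n) * g t - L * n * (g t / (2 * L * n)) ^ 2
            = g t ^ 2 / (4 * L * n) := by
          field_simp
          ring
        linarith [hbd, this]
      have : min (g t ^ 2 / (4 * L * n)) (g t / 2) ≤ g t ^ 2 / (4 * L * n) :=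
        min_le_left _ _
      linarith
    · have hμeq : μ t = 1 := by
        rw [hμ t, min_eq_right]
        exact (one_le_div hLn).mpr hcase.le
      rw [hμeq] at hbd
      have : min (g t ^ 2 / (4 * L * n)) (g t / 2) ≤ g t / 2 := min_le_right _ _
      nlinarith
  -- telescoping
  have hsum : ∀ T : ℕ, f (F (T + 1)) +
      ∑ k ∈ Finset.range (T + 1), min (g k ^ 2 / (4 * L * n)) (g k / 2) ≤ f (F 0) := by
    intro T
    induction T with
    | zero =>
      have := hstep 0
      simp only [Finset.sum_range_succ, Finset.sum_range_zero, zero_add]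
      linarith
    | succ T ih =>
      rw [Finset.sum_range_succ]
      have := hstep (T + 1)
      linarith
  intro T
  set G := (Finset.range (T + 1)).inf' Finset.nonempty_range_add_one g with hG
  have hGle : ∀ k ∈ Finset.range (T + 1), G ≤ g k := fun k hk => Finset.inf'_le g hk
  obtain ⟨k0, hk0, hGeq⟩ := Finset.exists_mem_eq_inf' (Finset.nonempty_range_add_one) g
  have hG0 : 0 ≤ G := by rw [hG, hGeq]; exact hg0 k0
  set m := min (G ^ 2 / (4 * L * n)) (G / 2) with hm
  have hterm : ∀ k ∈ Finset.range (T + 1),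
      m ≤ min (g k ^ 2 / (4 * L * n)) (g k / 2) := by
    intro k hk
    have h1 : G ^ 2 / (4 * L * n) ≤ g k ^ 2 / (4 * L * n) := by
      apply div_le_div_of_nonneg_right _ (by positivity)
      · exact pow_le_pow_left₀ hG0 (hGle k hk) 2
    have h2 : G / 2 ≤ g k / 2 := by linarith [hGle k hk]
    exact min_le_min h1 h2
  have hcard : ((T : ℝ) + 1) * m ≤
      ∑ k ∈ Finset.range (T + 1), min (g k ^ 2 / (4 * L * n)) (g k / 2) := by
    have := Finset.card_nsmul_le_sum (Finset.range (T + 1))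
      (fun k => min (g k ^ 2 / (4 * L * n)) (g k / 2)) m hterm
    rw [Finset.card_range] at this
    have hcast : ((T + 1 : ℕ) : ℝ) * m = (T + 1 : ℕ) • m := (nsmul_eq_mul _ _).symm
    push_cast at hcast ⊢
    rw [hcast]
    exact_mod_cast this
  have hfopt : f Fstar ≤ f (F (T + 1)) := hopt _ (hmem (T + 1))
  have hmain : ((T : ℝ) + 1) * m ≤ f (F 0) - f Fstar := by
    have := hsum T
    linarith
  have hh0 : 0 ≤ f (F 0) - f Fstar := by linarith [hopt _ hF0]
  set M := max (2 * (f (F 0) - f Fstar)) (2 * n * L) with hM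
  have hM1 : 2 * (f (F 0) - f Fstar) ≤ M := le_max_left _ _
  have hM2 : 2 * n * L ≤ M := le_max_right _ _
  have hM0 : 0 ≤ M := le_trans (by positivity) hM2
  have hs0 : 0 < Real.sqrt ((T : ℝ) + 1) := Real.sqrt_pos.mpr (by positivity)
  have hs2 : Real.sqrt ((T : ℝ) + 1) ^ 2 = (T : ℝ) + 1 :=
    Real.sq_sqrt (by positivity)
  have hs1 : (1 : ℝ) ≤ Real.sqrt ((T : ℝ) + 1) := by
    have h := Real.sqrt_le_sqrt (show (1:ℝ) ≤ (T : ℝ) + 1 by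
      linarith [Nat.cast_nonneg (α := ℝ) T])
    simpa using h
  have hsle : Real.sqrt ((T : ℝ) + 1) ≤ (T : ℝ) + 1 := by
    nlinarith
  rw [le_div_iff₀ hs0]
  rcases min_cases (G ^ 2 / (4 * L * n)) (G / 2) with ⟨heq, _⟩ | ⟨heq, _⟩
  · -- m = G²/(4Ln)
    rw [hm, heq] at hmain
    have hsq : (G * Real.sqrt ((T : ℝ) + 1)) ^ 2 ≤ M ^ 2 := by
      have h1 : G ^ 2 * ((T : ℝ) + 1) ≤ 4 * L * n * (f (F 0) - f Fstar) := by
        have h := mul_le_mul_of_nonneg_left hmain (show (0:ℝ) ≤ 4 * L * n by positivity)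
        have e : 4 * L * n * (((T : ℝ) + 1) * (G ^ 2 / (4 * L * n))) = G ^ 2 * ((T : ℝ) + 1) := by
          field_simp
        rw [e] at h
        linarith
      have h2 : 4 * L * n * (f (F 0) - f Fstar) ≤ M ^ 2 := by
        have := mul_le_mul hM2 hM1 (by positivity) hM0
        nlinarith
      calc (G * Real.sqrt ((T : ℝ) + 1)) ^ 2 = G ^ 2 * Real.sqrt ((T : ℝ) + 1) ^ 2 := by
            ring
        _ = G ^ 2 * ((T : ℝ) + 1) := by rw [hs2]
        _ ≤ M ^ 2 := le_trans h1 h2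
    nlinarith [mul_nonneg hG0 hs0.le]
  · -- m = G/2
    rw [hm, heq] at hmain
    have h1 : G * Real.sqrt ((T : ℝ) + 1) ≤ G * ((T : ℝ) + 1) :=
      mul_le_mul_of_nonneg_left hsle hG0
    nlinarith
end

section
/- (Sequence lemma for the O(1/√t) rate.) Let C > 0 be a real number, T a natural number, h : ℕ → ℝ, g : ℕ → ℝ with g(t) ≥ 0 for all t, and h* ∈ ℝ with h* ≤ h(t) for all t ≤ T+1. Suppose for every t ≤ T, h(t+1) ≤ h(t) − B(t), where B(t) = g(t)²/(4C) if g(t) ≤ 2C and B(t) = g(t) − C otherwise. Then min_{0 ≤ k ≤ T} g(k) ≤ max{2(h(0) − h*), 2C} / √(T+1). -/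
lemma telescope_aux (h : ℕ → ℝ) (b : ℝ) :
    ∀ T : ℕ, (∀ t ≤ T, h (t + 1) ≤ h t - b) → h (T + 1) ≤ h 0 - ((T : ℝ) + 1) * b := by
  intro T
  induction T with
  | zero => intro H; have := H 0 le_rfl; push_cast; linarith
  | succ n ih =>
    intro H
    have h1 := ih (fun t ht => H t (by omega))
    have h2 := H (n + 1) le_rfl
    push_cast at *
    linarith

/-- Sequence lemma for the `O(1/√t)` dual-gap rate: if `h` decreases at each step by at
least `g(t)²/(4C)` when `g(t) ≤ 2C` and by at least `g(t) − C` otherwise, and is bounded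
below by `h*`, then `min_{0 ≤ k ≤ T} g(k) ≤ max{2(h(0) − h*), 2C}/√(T+1)`. -/
theorem sqrt_rate_sequence_lemma (C : ℝ) (hC : 0 < C) (T : ℕ)
    (h : ℕ → ℝ) (g : ℕ → ℝ) (hg : ∀ t, 0 ≤ g t)
    (hstar : ℝ) (hlb : ∀ t ≤ T + 1, hstar ≤ h t)
    (hdec : ∀ t ≤ T,
      h (t + 1) ≤ h t - (if g t ≤ 2 * C then (g t) ^ 2 / (4 * C) else g t - C)) :
    (Finset.range (T + 1)).inf' Finset.nonempty_range_add_one g ≤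
      max (2 * (h 0 - hstar)) (2 * C) / Real.sqrt ((T : ℝ) + 1) := by
  set m := (Finset.range (T + 1)).inf' Finset.nonempty_range_add_one g with hm
  set M := max (2 * (h 0 - hstar)) (2 * C) with hM
  have hm0 : 0 ≤ m := Finset.le_inf' _ _ (fun i _ => hg i)
  have hmle : ∀ t ≤ T, m ≤ g t := fun t ht =>
    Finset.inf'_le _ (Finset.mem_range.2 (Nat.lt_succ_of_le ht))
  have h0star : 0 ≤ h 0 - hstar := by have := hlb 0 (by omega); linarith
  have hM0 : 0 ≤ M := le_trans (by linarith) (le_max_left _ _)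
  have hT1 : (1 : ℝ) ≤ (T : ℝ) + 1 := by
    have := Nat.cast_nonneg (α := ℝ) T; linarith
  have hs : 0 < Real.sqrt ((T : ℝ) + 1) := Real.sqrt_pos.2 (by linarith)
  have hlast := hlb (T + 1) le_rfl
  rw [le_div_iff₀ hs]
  by_cases hcase : m ≤ 2 * C
  · -- each step decreases by at least m^2/(4C)
    have key : ∀ t ≤ T, h (t + 1) ≤ h t - m ^ 2 / (4 * C) := by
      intro t ht
      refine (hdec t ht).trans ?_
      have hmt := hmle t ht
      have : m ^ 2 / (4 * C) ≤ (if g t ≤ 2 * C then (g t) ^ 2 / (4 * C) else g t - C) := by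
        split_ifs with hgt
        · gcongr
        · have h1 : m ^ 2 / (4 * C) ≤ C := by
            rw [div_le_iff₀ (by linarith)]
            nlinarith
          push_neg at hgt
          linarith
      linarith
    have htel := telescope_aux h (m ^ 2 / (4 * C)) T (by
      intro t ht; have := key t ht; linarith)
    have hsum : ((T : ℝ) + 1) * (m ^ 2 / (4 * C)) ≤ h 0 - hstar := by linarith
    have hsum' : m ^ 2 * ((T : ℝ) + 1) ≤ M ^ 2 := by
      have hmax1 : 2 * (h 0 - hstar) ≤ M := le_max_left _ _
      have hmax2 : 2 * C ≤ M := le_max_right _ _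
      have h4C : ((T : ℝ) + 1) * m ^ 2 ≤ 4 * C * (h 0 - hstar) := by
        rw [← mul_div_assoc, div_le_iff₀ (by linarith : (0:ℝ) < 4 * C)] at hsum
        nlinarith
      nlinarith
    have := Real.sqrt_le_sqrt hsum'
    rwa [Real.sqrt_mul (sq_nonneg m), Real.sqrt_sq hm0, Real.sqrt_sq hM0] at this
  · push_neg at hcase
    have key : ∀ t ≤ T, h (t + 1) ≤ h t - (m - C) := by
      intro t ht
      refine (hdec t ht).trans ?_
      have hmt := hmle t ht
      split_ifs with hgt
      · linarith
      · linarith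
    have htel := telescope_aux h (m - C) T key
    have hsum : ((T : ℝ) + 1) * (m - C) ≤ h 0 - hstar := by linarith
    have hmT : m * ((T : ℝ) + 1) ≤ M := by
      have hmax1 : 2 * (h 0 - hstar) ≤ M := le_max_left _ _
      nlinarith
    have hsle : Real.sqrt ((T : ℝ) + 1) ≤ (T : ℝ) + 1 := by
      have h2 : Real.sqrt ((T : ℝ) + 1) ≤ Real.sqrt (((T : ℝ) + 1) ^ 2) :=
        Real.sqrt_le_sqrt (by nlinarith)
      rwa [Real.sqrt_sq (by linarith)] at h2
    calc m * Real.sqrt ((T : ℝ) + 1) ≤ m * ((T : ℝ) + 1) := by gcongr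
      _ ≤ M := hmT
end

section
/- (DNF convergence for size-constrained min cut.) Let n, c be positive integers, 0 ≤ b_l ≤ b_u reals, Ω the dual-bounded constraint set in ℝ^{n×c}, assumed nonempty, and let S ∈ ℝ^{n×n} be a symmetric matrix with ‖S‖_F > 0. Define f : ℝ^{n×c} → ℝ by f(F) = −tr(FᵀSF), whose gradient with respect to the Frobenius inner product is ∇f(F) = −2SF, and let F* ∈ Ω satisfy f(F*) ≤ f(P) for all P ∈ Ω. Starting from F⁰ ∈ Ω, at each step let P^t ∈ Ω satisfy ⟨−2SF^t, P^t⟩_F ≤ ⟨−2SF^t, P⟩_F for all P ∈ Ω, set g_t = ⟨−2SF^t, F^t − P^t⟩_F, μ_t = min(g_t/(4n‖S‖_F), 1), and F^{t+1} = F^t + μ_t(P^t − F^t). Then for every t ≥ 0, min_{0 ≤ k ≤ t} g_k ≤ max{2(f(F⁰) − f(F*)), 4n‖S‖_F} / √(t+1). -/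
open scoped Matrix

/-- The dual-bounded constraint set
`Ω = {X : X·1_c = 1_n, b_l·1_c ≤ Xᵀ·1_n ≤ b_u·1_c, X ≥ 0}`. -/
def dualBoundedSet (n c : ℕ) (bl bu : ℝ) : Set (Matrix (Fin n) (Fin c) ℝ) :=
  {X | (∀ i, ∑ j, X i j = 1) ∧ (∀ j, bl ≤ ∑ i, X i j) ∧ (∀ j, ∑ i, X i j ≤ bu) ∧
    (∀ i j, 0 ≤ X i j)}

/-- The Frobenius norm of a real matrix. -/
noncomputable def frobNorm {m k : ℕ} (A : Matrix (Fin m) (Fin k) ℝ) : ℝ :=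
  Real.sqrt (∑ i, ∑ j, (A i j) ^ 2)

/-- The Frobenius inner product `⟨A, B⟩_F = tr(Aᵀ B)`. -/
def frobInner {m k : ℕ} (A B : Matrix (Fin m) (Fin k) ℝ) : ℝ :=
  Matrix.trace (Aᵀ * B)

lemma trB_eq_sum (S : Matrix (Fin n) (Fin n) ℝ) (X Y : Matrix (Fin n) (Fin c) ℝ) :
    Matrix.trace (Xᵀ * S * Y) = ∑ p : Fin n × Fin n, S p.2 p.1 * ∑ j, Y p.1 j * X p.2 j := by
  simp only [Matrix.trace, Matrix.diag, Matrix.mul_apply, Matrix.transpose_apply,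
    Fintype.sum_prod_type, Finset.mul_sum, Finset.sum_mul]
  rw [Finset.sum_comm]
  refine Finset.sum_congr rfl fun i _ => ?_
  rw [Finset.sum_comm]
  refine Finset.sum_congr rfl fun k _ => ?_
  refine Finset.sum_congr rfl fun j _ => ?_
  ring

lemma quad_bound (S : Matrix (Fin n) (Fin n) ℝ) (D : Matrix (Fin n) (Fin c) ℝ) :
    |Matrix.trace (Dᵀ * S * D)| ≤ frobNorm S * (∑ i, ∑ j, (D i j) ^ 2) := by
  have hSsum : ∑ p : Fin n × Fin n, (S p.2 p.1) ^ 2 = ∑ i, ∑ j, (S i j) ^ 2 := by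
    rw [Fintype.sum_prod_type, Finset.sum_comm]
  have hDnn : (0:ℝ) ≤ ∑ i, ∑ j, (D i j) ^ 2 :=
    Finset.sum_nonneg fun _ _ => Finset.sum_nonneg fun _ _ => sq_nonneg _
  have hSnn : (0:ℝ) ≤ ∑ i, ∑ j, (S i j) ^ 2 :=
    Finset.sum_nonneg fun _ _ => Finset.sum_nonneg fun _ _ => sq_nonneg _
  have h3 : ∑ p : Fin n × Fin n, (∑ j, D p.1 j * D p.2 j) ^ 2
      ≤ (∑ i, ∑ j, (D i j) ^ 2) ^ 2 := by
    calc ∑ p : Fin n × Fin n, (∑ j, D p.1 j * D p.2 j) ^ 2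
        ≤ ∑ p : Fin n × Fin n, (∑ j, (D p.1 j) ^ 2) * ∑ j, (D p.2 j) ^ 2 :=
          Finset.sum_le_sum fun p _ => Finset.sum_mul_sq_le_sq_mul_sq Finset.univ _ _
      _ = (∑ i, ∑ j, (D i j) ^ 2) ^ 2 := by
          rw [Fintype.sum_prod_type, sq, Finset.sum_mul_sum]
  have key : (Matrix.trace (Dᵀ * S * D)) ^ 2
      ≤ (frobNorm S * (∑ i, ∑ j, (D i j) ^ 2)) ^ 2 := by
    calc (Matrix.trace (Dᵀ * S * D)) ^ 2
        ≤ (∑ p : Fin n × Fin n, (S p.2 p.1) ^ 2) *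
          ∑ p : Fin n × Fin n, (∑ j, D p.1 j * D p.2 j) ^ 2 := by
          rw [trB_eq_sum]
          exact Finset.sum_mul_sq_le_sq_mul_sq Finset.univ _ _
      _ ≤ (∑ p : Fin n × Fin n, (S p.2 p.1) ^ 2) * (∑ i, ∑ j, (D i j) ^ 2) ^ 2 := by
          apply mul_le_mul_of_nonneg_left h3
          rw [hSsum]; exact hSnn
      _ = (frobNorm S * (∑ i, ∑ j, (D i j) ^ 2)) ^ 2 := by
          rw [hSsum, mul_pow, frobNorm, Real.sq_sqrt hSnn]
  have hrhs : 0 ≤ frobNorm S * (∑ i, ∑ j, (D i j) ^ 2) :=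
    mul_nonneg (Real.sqrt_nonneg _) hDnn
  exact abs_le.mpr (abs_le_of_sq_le_sq' key hrhs)

lemma trB_symm (S : Matrix (Fin n) (Fin n) ℝ) (hS : Sᵀ = S) (X Y : Matrix (Fin n) (Fin c) ℝ) :
    Matrix.trace (Xᵀ * S * Y) = Matrix.trace (Yᵀ * S * X) := by
  rw [← Matrix.trace_transpose (Xᵀ * S * Y)]
  simp [Matrix.transpose_mul, hS, Matrix.mul_assoc]

lemma trB_expand (S : Matrix (Fin n) (Fin n) ℝ) (hS : Sᵀ = S)
    (X D : Matrix (Fin n) (Fin c) ℝ) (μ : ℝ) :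
    Matrix.trace ((X + μ • D)ᵀ * S * (X + μ • D))
      = Matrix.trace (Xᵀ * S * X) + 2 * μ * Matrix.trace (Xᵀ * S * D)
        + μ ^ 2 * Matrix.trace (Dᵀ * S * D) := by
  have hsymm := trB_symm S hS D X
  simp only [Matrix.transpose_add, Matrix.transpose_smul, Matrix.add_mul, Matrix.mul_add,
    Matrix.smul_mul, Matrix.mul_smul, Matrix.trace_add, Matrix.trace_smul, smul_eq_mul]
  rw [hsymm]; ring

lemma frobInner_grad (S : Matrix (Fin n) (Fin n) ℝ) (hS : Sᵀ = S)
    (X Y : Matrix (Fin n) (Fin c) ℝ) :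
    frobInner (-(2 : ℝ) • (S * X)) Y = -2 * Matrix.trace (Xᵀ * S * Y) := by
  simp [frobInner, Matrix.transpose_smul, Matrix.transpose_mul, hS, Matrix.smul_mul,
    Matrix.trace_smul, Matrix.mul_assoc, smul_eq_mul]

lemma frobInner_sub {m k : ℕ} (A X Y : Matrix (Fin m) (Fin k) ℝ) :
    frobInner A (X - Y) = frobInner A X - frobInner A Y := by
  simp [frobInner, Matrix.mul_sub]

lemma dbs_le_one {bl bu : ℝ} {X : Matrix (Fin n) (Fin c) ℝ}
    (hX : X ∈ dualBoundedSet n c bl bu) : ∀ i j, X i j ≤ 1 := by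
  intro i j
  calc X i j ≤ ∑ j', X i j' :=
        Finset.single_le_sum (fun j' _ => hX.2.2.2 i j') (Finset.mem_univ j)
    _ = 1 := hX.1 i

lemma dbs_diff_sq {bl bu : ℝ} {X Y : Matrix (Fin n) (Fin c) ℝ}
    (hX : X ∈ dualBoundedSet n c bl bu) (hY : Y ∈ dualBoundedSet n c bl bu) :
    ∑ i, ∑ j, (Y i j - X i j) ^ 2 ≤ 2 * n := by
  have h : ∀ i, ∑ j, (Y i j - X i j) ^ 2 ≤ 2 := by
    intro i
    calc ∑ j, (Y i j - X i j) ^ 2 ≤ ∑ j, (Y i j + X i j) := by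
          apply Finset.sum_le_sum
          intro j _
          have h1 := hX.2.2.2 i j; have h2 := hY.2.2.2 i j
          have h3 := dbs_le_one hX i j; have h4 := dbs_le_one hY i j
          nlinarith
      _ = 2 := by rw [Finset.sum_add_distrib, hY.1 i, hX.1 i]; norm_num
  calc ∑ i, ∑ j, (Y i j - X i j) ^ 2 ≤ ∑ _i : Fin n, (2:ℝ) :=
        Finset.sum_le_sum fun i _ => h i
    _ = 2 * n := by simp [mul_comm]

lemma dbs_convex {bl bu : ℝ} {X Y : Matrix (Fin n) (Fin c) ℝ} {μ : ℝ}
    (hX : X ∈ dualBoundedSet n c bl bu) (hY : Y ∈ dualBoundedSet n c bl bu)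
    (h0 : 0 ≤ μ) (h1 : μ ≤ 1) : X + μ • (Y - X) ∈ dualBoundedSet n c bl bu := by
  have hentry : ∀ i j, (X + μ • (Y - X)) i j = X i j + μ * (Y i j - X i j) := by
    intro i j; simp [Matrix.add_apply, Matrix.smul_apply, Matrix.sub_apply]
  refine ⟨?_, ?_, ?_, ?_⟩
  · intro i
    simp only [hentry]
    rw [Finset.sum_add_distrib, ← Finset.mul_sum, Finset.sum_sub_distrib, hX.1 i, hY.1 i]
    ring
  · intro j
    simp only [hentry]
    rw [Finset.sum_add_distrib, ← Finset.mul_sum, Finset.sum_sub_distrib]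
    have hx := hX.2.1 j; have hy := hY.2.1 j
    nlinarith
  · intro j
    simp only [hentry]
    rw [Finset.sum_add_distrib, ← Finset.mul_sum, Finset.sum_sub_distrib]
    have hx := hX.2.2.1 j; have hy := hY.2.2.1 j
    nlinarith
  · intro i j
    rw [hentry]
    have h1' := hX.2.2.2 i j; have h2 := hY.2.2.2 i j
    nlinarith


set_option maxHeartbeats 1000000 in
/-- DNF convergence for size-constrained min cut: the minimal dual gap over the first
`t+1` iterations is at most `max{2(f(F⁰) − f(F*)), 4n‖S‖_F}/√(t+1)`. -/
theorem dnf_min_cut_convergence {n c : ℕ} (hn : 0 < n) (hc : 0 < c)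
    (bl bu : ℝ) (hbl : 0 ≤ bl) (hbu : bl ≤ bu)
    (hne : (dualBoundedSet n c bl bu).Nonempty)
    (S : Matrix (Fin n) (Fin n) ℝ) (hS : Sᵀ = S) (hSpos : 0 < frobNorm S)
    (f : Matrix (Fin n) (Fin c) ℝ → ℝ)
    (hf : ∀ F, f F = -(Matrix.trace (Fᵀ * S * F)))
    (Fstar : Matrix (Fin n) (Fin c) ℝ) (hFstar : Fstar ∈ dualBoundedSet n c bl bu)
    (hopt : ∀ P ∈ dualBoundedSet n c bl bu, f Fstar ≤ f P)
    (F P : ℕ → Matrix (Fin n) (Fin c) ℝ) (g μ : ℕ → ℝ)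
    (hF0 : F 0 ∈ dualBoundedSet n c bl bu)
    (hP : ∀ t, P t ∈ dualBoundedSet n c bl bu)
    (hPmin : ∀ t, ∀ Q ∈ dualBoundedSet n c bl bu,
      frobInner (-(2 : ℝ) • (S * F t)) (P t) ≤ frobInner (-(2 : ℝ) • (S * F t)) Q)
    (hg : ∀ t, g t = frobInner (-(2 : ℝ) • (S * F t)) (F t - P t))
    (hμ : ∀ t, μ t = min (g t / (4 * n * frobNorm S)) 1)
    (hupd : ∀ t : ℕ, F (t + 1) = F t + μ t • (P t - F t)) :
    ∀ t : ℕ, (Finset.range (t + 1)).inf' Finset.nonempty_range_add_one g ≤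
      max (2 * (f (F 0) - f Fstar)) (4 * n * frobNorm S) / Real.sqrt ((t : ℝ) + 1) := by
  set C : ℝ := 4 * n * frobNorm S with hCdef
  have hCpos : 0 < C := by
    have : (0:ℝ) < (n:ℝ) := by exact_mod_cast hn
    rw [hCdef]; positivity
  clear_value C
  -- membership of iterates
  have hmem : ∀ t, F t ∈ dualBoundedSet n c bl bu := by
    intro t
    induction t with
    | zero => exact hF0
    | succ k ih =>
      have hgk : 0 ≤ g k := by
        rw [hg, frobInner_sub]
        have := hPmin k (F k) ih
        linarith
      have hμ0 : 0 ≤ μ k := by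
        rw [hμ]; exact le_min (div_nonneg hgk hCpos.le) zero_le_one
      have hμ1 : μ k ≤ 1 := by rw [hμ]; exact min_le_right _ _
      rw [hupd]
      exact dbs_convex ih (hP k) hμ0 hμ1
  have hgnn : ∀ t, 0 ≤ g t := by
    intro t
    rw [hg, frobInner_sub]
    have := hPmin t (F t) (hmem t)
    linarith
  have hμ0 : ∀ t, 0 ≤ μ t := fun t => by
    rw [hμ]; exact le_min (div_nonneg (hgnn t) hCpos.le) zero_le_one
  -- per-step decrease
  have hstep : ∀ t, f (F (t + 1)) + g t * μ t / 2 ≤ f (F t) := by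
    intro t
    set D : Matrix (Fin n) (Fin c) ℝ := P t - F t with hD
    have hgeq : g t = 2 * Matrix.trace ((F t)ᵀ * S * D) := by
      rw [hg, frobInner_grad S hS]
      have hFP : F t - P t = -D := by rw [hD, neg_sub]
      rw [hFP, Matrix.mul_neg, Matrix.trace_neg]
      ring
    have e1 : f (F (t + 1)) = f (F t) - μ t * g t - (μ t) ^ 2 * Matrix.trace (Dᵀ * S * D) := by
      rw [hupd t, hf, hf, trB_expand S hS (F t) D (μ t), hgeq]
      ring
    have habs : |Matrix.trace (Dᵀ * S * D)| ≤ C / 2 := by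
      have h1 := quad_bound S D
      have h2 : ∑ i, ∑ j, (D i j) ^ 2 ≤ 2 * n := by
        have := dbs_diff_sq (hmem t) (hP t)
        simpa [hD, Matrix.sub_apply] using this
      calc |Matrix.trace (Dᵀ * S * D)| ≤ frobNorm S * (∑ i, ∑ j, (D i j) ^ 2) := h1
        _ ≤ frobNorm S * (2 * n) := mul_le_mul_of_nonneg_left h2 hSpos.le
        _ = C / 2 := by rw [hCdef]; ring
    have hkey : g t * μ t / 2 ≤ μ t * g t - (μ t) ^ 2 * (C / 2) := by
      rcases le_or_gt (g t) C with h | h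
      · have hμv : μ t = g t / C := by
          rw [hμ]; exact min_eq_left ((div_le_one hCpos).mpr h)
        rw [hμv]
        apply le_of_eq
        field_simp
        ring
      · have hμv : μ t = 1 := by
          rw [hμ]; exact min_eq_right ((one_le_div hCpos).mpr h.le)
        rw [hμv]; nlinarith
    have hq : -((μ t) ^ 2 * Matrix.trace (Dᵀ * S * D)) ≤ (μ t) ^ 2 * (C / 2) := by
      have := neg_abs_le (Matrix.trace (Dᵀ * S * D))
      have h2 : (μ t) ^ 2 * |Matrix.trace (Dᵀ * S * D)| ≤ (μ t) ^ 2 * (C / 2) :=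
        mul_le_mul_of_nonneg_left habs (sq_nonneg _)
      nlinarith [abs_nonneg (Matrix.trace (Dᵀ * S * D)), neg_abs_le (Matrix.trace (Dᵀ * S * D)), sq_nonneg (μ t)]
    linarith [e1, hkey, hq]
  -- telescoping
  have hsum : ∀ T : ℕ, ∑ k ∈ Finset.range T, g k * μ k / 2 ≤ f (F 0) - f (F T) := by
    intro T
    induction T with
    | zero => simp
    | succ k ih =>
      rw [Finset.sum_range_succ]
      have := hstep k
      linarith
  intro t
  set h0 : ℝ := f (F 0) - f Fstar with hh0
  clear_value h0
  have hh0nn : 0 ≤ h0 := by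
    have := hopt (F 0) hF0
    simp [hh0]; linarith
  have hsum' : ∑ k ∈ Finset.range (t + 1), g k * μ k / 2 ≤ h0 := by
    have h1 := hsum (t + 1)
    have h2 := hopt (F (t + 1)) (hmem (t + 1))
    rw [hh0]; linarith
  set m : ℝ := (Finset.range (t + 1)).inf' Finset.nonempty_range_add_one g with hm
  clear_value m
  have hm0 : 0 ≤ m := by
    obtain ⟨k0, hk0, hmk0⟩ := Finset.exists_mem_eq_inf' Finset.nonempty_range_add_one g
    rw [hm, hmk0]; exact hgnn k0
  have hterm : ∀ k ∈ Finset.range (t + 1), m * min (m / C) 1 / 2 ≤ g k * μ k / 2 := by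
    intro k hk
    have hmk : m ≤ g k := by rw [hm]; exact Finset.inf'_le g hk
    have hminle : min (m / C) 1 ≤ μ k := by
      rw [hμ]
      exact min_le_min (by gcongr) le_rfl
    have hminnn : 0 ≤ min (m / C) 1 := le_min (div_nonneg hm0 hCpos.le) zero_le_one
    have := mul_le_mul hmk hminle hminnn (hgnn k)
    linarith
  have hmain : ((t : ℝ) + 1) * (m * min (m / C) 1 / 2) ≤ h0 := by
    calc ((t : ℝ) + 1) * (m * min (m / C) 1 / 2)
        = ∑ _k ∈ Finset.range (t + 1), m * min (m / C) 1 / 2 := by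
          rw [Finset.sum_const, Finset.card_range, nsmul_eq_mul]
          push_cast; ring
      _ ≤ ∑ k ∈ Finset.range (t + 1), g k * μ k / 2 := Finset.sum_le_sum hterm
      _ ≤ h0 := hsum'
  set M : ℝ := max (2 * h0) C with hM
  clear_value M
  have hMnn : 0 ≤ M := by rw [hM]; exact le_trans hCpos.le (le_max_right _ _)
  have htpos : (0:ℝ) < (t : ℝ) + 1 := by positivity
  have hs : Real.sqrt ((t : ℝ) + 1) > 0 := Real.sqrt_pos.mpr htpos
  have hssq : Real.sqrt ((t : ℝ) + 1) ^ 2 = (t : ℝ) + 1 := Real.sq_sqrt htpos.le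
  have hsle : Real.sqrt ((t : ℝ) + 1) ≤ (t : ℝ) + 1 := by
    nlinarith [hs, hssq]
  show m ≤ M / Real.sqrt ((t : ℝ) + 1)
  rcases le_or_gt C m with hcase | hcase
  · -- min = 1
    have hminv : min (m / C) 1 = 1 := min_eq_right ((one_le_div hCpos).mpr hcase)
    rw [hminv] at hmain
    have h1 : m ≤ 2 * h0 / ((t : ℝ) + 1) := by
      rw [le_div_iff₀ htpos]; nlinarith
    calc m ≤ 2 * h0 / ((t : ℝ) + 1) := h1
      _ ≤ M / ((t : ℝ) + 1) := by gcongr; rw [hM]; exact le_max_left _ _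
      _ ≤ M / Real.sqrt ((t : ℝ) + 1) := by gcongr
  · -- min = m/C
    have hminv : min (m / C) 1 = m / C := min_eq_left ((div_le_one hCpos).mpr hcase.le)
    rw [hminv] at hmain
    have h1 : m ^ 2 * ((t : ℝ) + 1) ≤ 2 * h0 * C := by
      have he : m * (m / C) = m ^ 2 / C := by ring
      rw [he] at hmain
      have hmul := mul_le_mul_of_nonneg_left hmain hCpos.le
      have hcc : C * (((t : ℝ) + 1) * (m ^ 2 / C / 2)) = m ^ 2 * ((t : ℝ) + 1) / 2 := by
        field_simp
      rw [hcc] at hmul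
      linarith
    have h2 : 2 * h0 * C ≤ M ^ 2 := by
      have ha : 2 * h0 ≤ M := by rw [hM]; exact le_max_left _ _
      have hb : C ≤ M := by rw [hM]; exact le_max_right _ _
      nlinarith [hh0nn, hCpos]
    have h3 : m ^ 2 ≤ (M / Real.sqrt ((t : ℝ) + 1)) ^ 2 := by
      have e : (M / Real.sqrt ((t : ℝ) + 1)) ^ 2 = M ^ 2 / ((t : ℝ) + 1) := by
        rw [div_pow, hssq]
      rw [e, le_div_iff₀ htpos]
      exact h1.trans h2
    have h4 : 0 ≤ M / Real.sqrt ((t : ℝ) + 1) := div_nonneg hMnn hs.le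
    nlinarith [h3, h4, hm0]
end
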